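/- arXiv:1005.5503 — 4 statements merged into one kernel-verified Lean document; each statement's English description precedes it below -/
import Mathlib

section
/- Let G be a finite group with Sylow p-subgroup P. If the normalizer N_G(P) is p-nilpotent (has a normal p-complement), then for every subgroup Q with P' ≤ Q ≤ Φ(P) (derived subgroup and Frattini subgroup of P), the normalizer N_G(Q) is p-nilpotent. -/
open Subgroup
open scoped IsMulCommutative commutatorElement

universe u

section Helpers

variable {G : Type*} [Group G] {G' : Type*} [Group G']

lemma map_conj_map (f : G →* G') (g : G) (K : Subgroup G) :
    (K.map (MulAut.conj g).toMonoidHom).map f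
      = (K.map f).map (MulAut.conj (f g)).toMonoidHom := by
  rw [Subgroup.map_map, Subgroup.map_map]
  congr 1
  ext x
  simp [MulAut.conj]

lemma card_map_ker_le [Finite G] (f : G →* G') (X : Subgroup G) (h : f.ker ≤ X) :
    Nat.card X = Nat.card (X.map f) * Nat.card f.ker := by
  have hker : (f.comp X.subtype).ker = f.ker.subgroupOf X := rfl
  have hrange : (f.comp X.subtype).range = X.map f := by
    rw [MonoidHom.range_comp, Subgroup.range_subtype]
  have h1 := Subgroup.card_eq_card_quotient_mul_card_subgroup (f.comp X.subtype).ker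
  rw [Nat.card_congr (QuotientGroup.quotientKerEquivRange (f.comp X.subtype)).toEquiv] at h1
  rw [h1, hrange, hker, Nat.card_congr (Subgroup.subgroupOfEquivOfLe h).toEquiv]

lemma card_map_disjoint [Finite G] (f : G →* G') (X : Subgroup G) (h : f.ker ⊓ X = ⊥) :
    Nat.card (X.map f) = Nat.card X := by
  have hker : (f.comp X.subtype).ker = ⊥ := by
    rw [← Subgroup.map_eq_bot_iff_of_injective _ (Subgroup.subtype_injective X)]
    have h2 : (f.comp X.subtype).ker = f.ker.subgroupOf X := rfl
    rw [h2, Subgroup.subgroupOf_map_subtype, h]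
  have hrange : (f.comp X.subtype).range = X.map f := by
    rw [MonoidHom.range_comp, Subgroup.range_subtype]
  have hinj : Function.Injective (f.comp X.subtype) :=
    (MonoidHom.ker_eq_bot_iff _).mp hker
  rw [← hrange, Nat.card_congr (MonoidHom.ofInjective hinj).toEquiv]

lemma subsingleton_of_commutator_eq_top [Group.IsSolvable G]
    (h : commutator G = ⊤) : Subsingleton G := by
  obtain ⟨n, hn⟩ := Group.IsSolvable.solvable (G := G)
  have htop : ∀ m, derivedSeries G m = ⊤ := by
    intro m
    induction m with
    | zero => exact derivedSeries_zero G
    | succ m ihm => rw [derivedSeries_succ, ihm, ← _root_.commutator_def, h]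
  rw [htop n] at hn
  constructor
  intro x y
  have hx : x ∈ (⊥ : Subgroup G) := hn ▸ mem_top x
  have hy : y ∈ (⊥ : Subgroup G) := hn ▸ mem_top y
  rw [mem_bot] at hx hy
  rw [hx, hy]

end Helpers


variable {G : Type u} [Group G]

lemma conj_complements_of_isCommutative [Finite G]
    (N K1 K2 : Subgroup G) [N.Normal] [IsMulCommutative N]
    (hco : Nat.Coprime (Nat.card N) N.index)
    (h1 : IsComplement' N K1) (h2 : IsComplement' N K2) :
    ∃ g : G, K1.map (MulAut.conj g).toMonoidHom = K2 := by
  classical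
  have : Fintype ↥K2 := Fintype.ofFinite _
  set a : K2 → N := fun k => (h1.equiv (k : G)).1 with ha
  set φ : K2 → K1 := fun k => (h1.equiv (k : G)).2 with hφ
  have hak : ∀ k : K2, ((a k : G)) * ((φ k : G)) = (k : G) :=
    fun k => h1.equiv_fst_mul_equiv_snd (k : G)
  have hdec : ∀ (k : K2) (n : N) (j : K1), (n : G) * (j : G) = (k : G) →
      n = a k ∧ j = φ k := by
    intro k n j h
    have h5 := (h1.existsUnique (k : G)).unique (y₁ := (n, j)) (y₂ := (a k, φ k)) h (hak k)
    exact ⟨congrArg Prod.fst h5, congrArg Prod.snd h5⟩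
  set ψ : K2 → MulAut ↥N := fun k => MulAut.conjNormal ((φ k : G)) with hψ
  have hψval : ∀ (k : K2) (x : ↥N), ((ψ k x : G)) = (φ k : G) * x * (φ k : G)⁻¹ :=
    fun k x => MulAut.conjNormal_apply _ _
  have hamul : ∀ k l : K2, a (k * l) = a k * (ψ k) (a l) := by
    intro k l
    refine (hdec (k * l) (a k * (ψ k) (a l)) (φ k * φ l) ?_).1.symm
    push_cast
    rw [hψval]
    rw [← hak k, ← hak l]
    group
  have hcardK2 : Nat.card ↥K2 = N.index := (h2.symm.index_eq_card).symm
  set b : ↥N := ∏ l : K2, a l with hbdef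
  have hb : ∀ k : K2, b = a k ^ N.index * (ψ k) b := by
    intro k
    have e1 : ∏ l : K2, a (k * l) = b :=
      Fintype.prod_equiv (Equiv.mulLeft k) _ _ (fun l => rfl)
    calc b = ∏ l : K2, a (k * l) := e1.symm
      _ = ∏ l : K2, (a k * (ψ k) (a l)) := Finset.prod_congr rfl (fun l _ => hamul k l)
      _ = (∏ _l : K2, a k) * ∏ l : K2, (ψ k) (a l) := Finset.prod_mul_distrib
      _ = a k ^ N.index * (ψ k) b := by
          rw [Finset.prod_const, Finset.card_univ, ← map_prod, ← hbdef,
            ← Nat.card_eq_fintype_card, hcardK2]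
  set h0 : ↥N := (powCoprime hco).symm b with hh0def
  have hpowapp : ∀ x : ↥N, powCoprime hco x = x ^ N.index := fun x => rfl
  have hh0 : h0 ^ N.index = b := by
    rw [← hpowapp, hh0def, Equiv.apply_symm_apply]
  have hkey : ∀ k : K2, a k * (ψ k) h0 = h0 := by
    intro k
    apply (powCoprime hco).injective
    rw [hpowapp, hpowapp, mul_pow, ← map_pow, hh0]
    exact (hb k).symm
  have hconj : ∀ k : K2, (h0 : G) * (φ k : G) * (h0 : G)⁻¹ = (k : G) := by
    intro k
    have h3 := congrArg (fun x : ↥N => (x : G)) (hkey k)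
    simp only [coe_mul, hψval] at h3
    rw [← eq_mul_inv_iff_mul_eq] at h3
    have h4 : ((a k : G)) = (h0 : G) * (φ k : G) * (h0 : G)⁻¹ * ((φ k : G))⁻¹ := by
      rw [h3]; group
    rw [← hak k, h4]
    group
  refine ⟨(h0 : G), ?_⟩
  have hle : K2 ≤ K1.map (MulAut.conj (h0 : G)).toMonoidHom := by
    intro x hx
    refine ⟨(φ ⟨x, hx⟩ : G), (φ ⟨x, hx⟩).2, ?_⟩
    simpa [MulAut.conj] using hconj ⟨x, hx⟩
  have hcard : Nat.card (K1.map (MulAut.conj (h0 : G)).toMonoidHom) ≤ Nat.card K2 := by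
    have e2 : Nat.card (K1.map (MulAut.conj (h0 : G)).toMonoidHom) = Nat.card K1 :=
      (Nat.card_congr (Subgroup.equivMapOfInjective K1 _
        (MulAut.conj (h0 : G)).injective).toEquiv).symm
    rw [e2, ← h1.symm.index_eq_card, ← h2.symm.index_eq_card]
  exact (Subgroup.eq_of_le_of_card_ge hle hcard).symm


lemma conj_complements_of_isPGroup (p : ℕ) [Fact p.Prime] :
    ∀ (n : ℕ) (G : Type u) [Group G] [Finite G] (N K1 K2 : Subgroup G), N.Normal →
      Nat.card N ≤ n → IsPGroup p ↥N →
      Nat.Coprime (Nat.card N) N.index →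
      IsComplement' N K1 → IsComplement' N K2 →
      ∃ g : G, K1.map (MulAut.conj g).toMonoidHom = K2 := by
  intro n
  induction n using Nat.strong_induction_on with
  | _ n ih =>
  intro G _ _ N K1 K2 hNormal hcard hp hco h1 h2
  haveI := hNormal
  by_cases hab : ∀ x y : ↥N, x * y = y * x
  · haveI : IsMulCommutative N := ⟨⟨hab⟩⟩
    exact conj_complements_of_isCommutative N K1 K2 hco h1 h2
  · set D := ⁅N, N⁆ with hD
    haveI hDnormal : D.Normal := Subgroup.commutator_normal N N
    have hDN : D ≤ N := Subgroup.commutator_le_left N N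
    have hDneN : D ≠ N := by
      intro hEq
      have hmap : (commutator ↥N).map N.subtype = D := by
        rw [_root_.commutator_def, Subgroup.map_commutator, ← MonoidHom.range_eq_map,
          Subgroup.range_subtype]
      have htop : commutator ↥N = ⊤ := by
        apply Subgroup.map_injective (Subgroup.subtype_injective N)
        rw [hmap, hEq, ← MonoidHom.range_eq_map, Subgroup.range_subtype]
      haveI : _root_.Group.IsNilpotent ↥N := hp.isNilpotent
      haveI := subsingleton_of_commutator_eq_top htop
      exact hab fun x y => Subsingleton.elim _ _
    have hcardD_lt : Nat.card D < Nat.card N := by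
      refine lt_of_le_of_ne (Subgroup.card_le_of_le hDN) ?_
      intro hEq
      exact hDneN (Subgroup.eq_of_le_of_card_ge hDN (le_of_eq hEq.symm))
    set π := QuotientGroup.mk' D with hπdef
    have hπs : Function.Surjective π := QuotientGroup.mk'_surjective D
    have hkerπ : π.ker = D := QuotientGroup.ker_mk' D
    haveI : Finite (G ⧸ D) := Quotient.finite _
    have hcN : Nat.card N = Nat.card (N.map π) * Nat.card D := by
      have h3 := card_map_ker_le π N (by rw [hkerπ]; exact hDN)
      rwa [hkerπ] at h3
    have hdisj1 : π.ker ⊓ K1 = ⊥ := by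
      rw [hkerπ, eq_bot_iff]
      intro x hx
      exact h1.disjoint.le_bot ⟨hDN hx.1, hx.2⟩
    have hdisj2 : π.ker ⊓ K2 = ⊥ := by
      rw [hkerπ, eq_bot_iff]
      intro x hx
      exact h2.disjoint.le_bot ⟨hDN hx.1, hx.2⟩
    have hcK1 : Nat.card (K1.map π) = Nat.card K1 := card_map_disjoint π K1 hdisj1
    have hcK2 : Nat.card (K2.map π) = Nat.card K2 := card_map_disjoint π K2 hdisj2
    have hcG : Nat.card G = Nat.card (G ⧸ D) * Nat.card D :=
      Subgroup.card_eq_card_quotient_mul_card_subgroup D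
    have hDpos : 0 < Nat.card D := Nat.card_pos
    have hK1idx : Nat.card K1 = N.index := (h1.symm.index_eq_card).symm
    have hK2idx : Nat.card K2 = N.index := (h2.symm.index_eq_card).symm
    have hmul1 : Nat.card (N.map π) * Nat.card (K1.map π) = Nat.card (G ⧸ D) := by
      apply Nat.eq_of_mul_eq_mul_right hDpos
      calc Nat.card (N.map π) * Nat.card (K1.map π) * Nat.card D
          = Nat.card (N.map π) * Nat.card D * Nat.card (K1.map π) := by ring
        _ = Nat.card N * Nat.card K1 := by rw [← hcN, hcK1]
        _ = Nat.card G := h1.card_mul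
        _ = Nat.card (G ⧸ D) * Nat.card D := hcG
    have hmul2 : Nat.card (N.map π) * Nat.card (K2.map π) = Nat.card (G ⧸ D) := by
      apply Nat.eq_of_mul_eq_mul_right hDpos
      calc Nat.card (N.map π) * Nat.card (K2.map π) * Nat.card D
          = Nat.card (N.map π) * Nat.card D * Nat.card (K2.map π) := by ring
        _ = Nat.card N * Nat.card K2 := by rw [← hcN, hcK2]
        _ = Nat.card G := h2.card_mul
        _ = Nat.card (G ⧸ D) * Nat.card D := hcG
    have hdvdN : Nat.card (N.map π) ∣ Nat.card N := Dvd.intro _ hcN.symm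
    have hcoN' : Nat.Coprime (Nat.card (N.map π)) N.index :=
      Nat.Coprime.coprime_dvd_left hdvdN hco
    have hco1 : Nat.Coprime (Nat.card (N.map π)) (Nat.card (K1.map π)) := by
      rw [hcK1, hK1idx]; exact hcoN'
    have hco2 : Nat.Coprime (Nat.card (N.map π)) (Nat.card (K2.map π)) := by
      rw [hcK2, hK2idx]; exact hcoN'
    haveI : (N.map π).Normal := hNormal.map π hπs
    have hc1 : IsComplement' (N.map π) (K1.map π) := isComplement'_of_coprime hmul1 hco1
    have hc2 : IsComplement' (N.map π) (K2.map π) := isComplement'_of_coprime hmul2 hco2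
    haveI : IsMulCommutative (N.map π) := by
      constructor; constructor
      rintro ⟨x, hx⟩ ⟨y, hy⟩
      obtain ⟨a, haN, rfl⟩ := hx
      obtain ⟨b, hbN, rfl⟩ := hy
      have : π a * π b = π b * π a := by
        rw [← map_mul, ← map_mul]
        refine (QuotientGroup.mk'_eq_mk' D).mpr ⟨b⁻¹ * a⁻¹ * b * a, ?_, by group⟩
        have := Subgroup.commutator_mem_commutator (N.inv_mem hbN) (N.inv_mem haN)
        rwa [commutatorElement_def, inv_inv, inv_inv] at this
      exact Subtype.ext this
    have hpN' : IsPGroup p ↥(N.map π) := hp.map π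
    have hcoidx : Nat.Coprime (Nat.card (N.map π)) (N.map π).index := by
      rw [hc1.symm.index_eq_card, hcK1, hK1idx]; exact hcoN'
    obtain ⟨gbar, hgbar⟩ :=
      conj_complements_of_isCommutative (N.map π) (K1.map π) (K2.map π) hcoidx hc1 hc2
    obtain ⟨g, rfl⟩ := hπs gbar
    set K1' := K1.map (MulAut.conj g).toMonoidHom with hK1'
    have hK1'map : K1'.map π = K2.map π := by rw [hK1', map_conj_map]; exact hgbar
    set S := (K2.map π).comap π with hSdef
    have hK2S : K2 ≤ S := le_comap_map _ _
    have hK1'S : K1' ≤ S := by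
      rw [hSdef, ← hK1'map]
      exact le_comap_map _ _
    have hDS : D ≤ S := by
      intro x hx
      have : π x = 1 := by rwa [← MonoidHom.mem_ker, hkerπ]
      simp only [hSdef, mem_comap, this]
      exact (K2.map π).one_mem
    have hSmap : S.map π = K2.map π := Subgroup.map_comap_eq_self_of_surjective hπs _
    have hcS : Nat.card S = Nat.card K2 * Nat.card D := by
      have h4 := card_map_ker_le π S (by rw [hkerπ]; exact hDS)
      rwa [hSmap, hkerπ, hcK2] at h4
    have e_D : Nat.card (D.subgroupOf S) = Nat.card D :=
      Nat.card_congr (Subgroup.subgroupOfEquivOfLe hDS).toEquiv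
    have e_K2 : Nat.card (K2.subgroupOf S) = Nat.card K2 :=
      Nat.card_congr (Subgroup.subgroupOfEquivOfLe hK2S).toEquiv
    have cK1' : Nat.card K1' = Nat.card K1 :=
      (Nat.card_congr (Subgroup.equivMapOfInjective K1 _ (MulAut.conj g).injective).toEquiv).symm
    have e_K1' : Nat.card (K1'.subgroupOf S) = Nat.card K2 := by
      rw [Nat.card_congr (Subgroup.subgroupOfEquivOfLe hK1'S).toEquiv, cK1', hK1idx, ← hK2idx]
    have hmulS2 : Nat.card (D.subgroupOf S) * Nat.card (K2.subgroupOf S) = Nat.card S := by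
      rw [e_D, e_K2, hcS]; ring
    have hmulS1 : Nat.card (D.subgroupOf S) * Nat.card (K1'.subgroupOf S) = Nat.card S := by
      rw [e_D, e_K1', hcS]; ring
    have hdvdD : Nat.card D ∣ Nat.card N := ⟨Nat.card (N.map π), by rw [hcN]; ring⟩
    have hcoD : Nat.Coprime (Nat.card D) N.index := Nat.Coprime.coprime_dvd_left hdvdD hco
    have hcoS2 : Nat.Coprime (Nat.card (D.subgroupOf S)) (Nat.card (K2.subgroupOf S)) := by
      rw [e_D, e_K2, hK2idx]; exact hcoD
    have hcoS1 : Nat.Coprime (Nat.card (D.subgroupOf S)) (Nat.card (K1'.subgroupOf S)) := by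
      rw [e_D, e_K1', hK2idx]; exact hcoD
    have hcS2 : IsComplement' (D.subgroupOf S) (K2.subgroupOf S) :=
      isComplement'_of_coprime hmulS2 hcoS2
    have hcS1 : IsComplement' (D.subgroupOf S) (K1'.subgroupOf S) :=
      isComplement'_of_coprime hmulS1 hcoS1
    have hpD' : IsPGroup p ↥(D.subgroupOf S) :=
      (hp.to_le hDN).of_equiv (Subgroup.subgroupOfEquivOfLe hDS).symm
    have hcoidxS : Nat.Coprime (Nat.card (D.subgroupOf S)) (D.subgroupOf S).index := by
      rw [hcS2.symm.index_eq_card, e_D, e_K2, hK2idx]; exact hcoD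
    obtain ⟨s, hs⟩ := ih (Nat.card D) (lt_of_lt_of_le hcardD_lt hcard) ↥S
      (D.subgroupOf S) (K1'.subgroupOf S) (K2.subgroupOf S) inferInstance
      (le_of_eq e_D) hpD' hcoidxS hcS1 hcS2
    have hfinal : K1'.map (MulAut.conj (s : G)).toMonoidHom = K2 := by
      have h6 := congrArg (Subgroup.map S.subtype) hs
      rw [map_conj_map S.subtype s (K1'.subgroupOf S)] at h6
      simp only [Subgroup.subgroupOf_map_subtype] at h6
      rw [inf_eq_left.mpr hK1'S, inf_eq_left.mpr hK2S] at h6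
      exact h6
    refine ⟨(s : G) * g, ?_⟩
    have hcomp : (MulAut.conj ((s : G) * g)).toMonoidHom
        = ((MulAut.conj (s : G)).toMonoidHom).comp (MulAut.conj g).toMonoidHom := by
      ext x
      simp [MulAut.conj, mul_assoc]
    rw [hcomp, ← Subgroup.map_map]
    exact hfinal


/-- A group is `p`-nilpotent if it has a normal `p`-complement, i.e. a normal
subgroup that is a complement to some Sylow `p`-subgroup. -/
def IsPNilpotent (p : ℕ) (G : Type*) [Group G] : Prop :=
  ∃ (P : Sylow p G) (K : Subgroup G), K.Normal ∧ Subgroup.IsComplement' (P : Subgroup G) K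

set_option maxHeartbeats 2000000 in
theorem navarro_pnilpotency (p : ℕ) [Fact p.Prime] (G : Type*) [Group G] [Finite G]
    (P : Sylow p G)
    (hN : IsPNilpotent p (Subgroup.normalizer ((P : Subgroup G) : Set G)))
    (Q : Subgroup G)
    (hP' : (commutator ↥(P : Subgroup G)).map (P : Subgroup G).subtype ≤ Q)
    (hΦ : Q ≤ (frattini ↥(P : Subgroup G)).map (P : Subgroup G).subtype) :
    IsPNilpotent p (Subgroup.normalizer (Q : Set G)) := by
  classical
  set H := Subgroup.normalizer (Q : Set G) with hHdef
  have hQP : Q ≤ (P : Subgroup G) := le_trans hΦ (map_subtype_le _)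
  -- commutators of elements of P lie in Q
  have hcommQ : ∀ x ∈ (P : Subgroup G), ∀ y ∈ (P : Subgroup G), x * y * x⁻¹ * y⁻¹ ∈ Q := by
    intro x hx y hy
    apply hP'
    refine ⟨⁅(⟨x, hx⟩ : ↥(P : Subgroup G)), (⟨y, hy⟩ : ↥(P : Subgroup G))⁆, ?_, ?_⟩
    · rw [_root_.commutator_def]
      exact commutator_mem_commutator (mem_top _) (mem_top _)
    · simp [commutatorElement_def, mul_assoc]
  -- P normalizes Q
  have hPH : (P : Subgroup G) ≤ H := by
    haveI hn : (Q.subgroupOf (P : Subgroup G)).Normal := by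
      constructor
      intro q hq g
      rw [mem_subgroupOf] at hq ⊢
      have h7 := hcommQ (↑g) g.2 (↑q) (hQP hq)
      have h8 : ((g * q * g⁻¹ : ↥(P : Subgroup G)) : G)
          = ((↑g * ↑q * (↑g)⁻¹ * (↑q)⁻¹ : G)) * (↑q : G) := by
        push_cast
        group
      rw [h8]
      exact Q.mul_mem h7 hq
    exact le_normalizer_of_normal_subgroupOf hQP
  have hQH : Q ≤ H := le_normalizer
  -- Sylow of H
  set P₁ : Sylow p ↥H := P.subtype hPH with hP₁def
  have hP₁coe : (P₁ : Subgroup ↥H) = (P : Subgroup G).subgroupOf H := rfl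
  set Q₁ : Subgroup ↥H := Q.subgroupOf H with hQ₁def
  haveI hQ₁norm : Q₁.Normal := Subgroup.normal_in_normalizer
  have hQ₁P₁ : Q₁ ≤ (P₁ : Subgroup ↥H) := by
    intro x hx
    exact hQP hx
  -- the fusion fact
  set R := Subgroup.normalizer ((P : Subgroup G) : Set G) with hRdef
  have hPR : (P : Subgroup G) ≤ R := le_normalizer
  obtain ⟨P₀, K₀, hK₀norm, hK₀comp⟩ := hN
  set Pr : Sylow p ↥R := P.subtype hPR with hPrdef
  haveI hPrnorm : (Pr : Subgroup ↥R).Normal := Subgroup.normal_in_normalizer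
  haveI := Sylow.unique_of_normal Pr hPrnorm
  have hP₀ : P₀ = Pr := Subsingleton.elim _ _
  rw [hP₀] at hK₀comp
  have hfus : ∀ m : ↥H, (↑m : G) ∈ R → ∀ x ∈ (P : Subgroup G),
      (↑m : G) * x * (↑m : G)⁻¹ * x⁻¹ ∈ Q := by
    intro m hmR x hx
    set mr : ↥R := ⟨↑m, hmR⟩ with hmrdef
    set u : ↥(Pr : Subgroup ↥R) := (hK₀comp.equiv mr).1 with hudef
    set k : ↥K₀ := (hK₀comp.equiv mr).2 with hkdef
    have huk : ((u : ↥R) : G) * ((k : ↥R) : G) = (↑m : G) := by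
      have := hK₀comp.equiv_fst_mul_equiv_snd mr
      exact congrArg (fun z : ↥R => (z : G)) this
    have hxR : x ∈ R := hPR hx
    have hcommk : ((k : ↥R)) * (⟨x, hxR⟩ : ↥R) = (⟨x, hxR⟩ : ↥R) * (k : ↥R) := by
      have hx' : (⟨x, hxR⟩ : ↥R) ∈ (Pr : Subgroup ↥R) := by
        rw [Sylow.coe_subtype]
        exact hx
      exact (Subgroup.commute_of_normal_of_disjoint _ _ hPrnorm hK₀norm
        hK₀comp.disjoint _ _ hx' k.2).symm
    have hcommkG : ((k : ↥R) : G) * x = x * ((k : ↥R) : G) :=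
      congrArg (fun z : ↥R => (z : G)) hcommk
    have hkxk : ((k : ↥R) : G) * x * ((k : ↥R) : G)⁻¹ = x := by
      rw [hcommkG]
      group
    have huP : ((u : ↥R) : G) ∈ (P : Subgroup G) := u.2
    have hcalc : (↑m : G) * x * (↑m : G)⁻¹ * x⁻¹
        = ((u : ↥R) : G) * (((k : ↥R) : G) * x * ((k : ↥R) : G)⁻¹) * ((u : ↥R) : G)⁻¹ * x⁻¹ := by
      rw [← huk]
      group
    rw [hcalc, hkxk]
    exact hcommQ _ huP x hx
  -- quotient by Q₁
  set π := QuotientGroup.mk' Q₁ with hπdef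
  have hπs : Function.Surjective π := QuotientGroup.mk'_surjective Q₁
  have hker : π.ker = Q₁ := QuotientGroup.ker_mk' Q₁
  haveI : Finite (↥H ⧸ Q₁) := Quotient.finite _
  set S : Sylow p (↥H ⧸ Q₁) := Sylow.mapSurjective hπs P₁ with hSdef
  have hScoe : (S : Subgroup (↥H ⧸ Q₁)) = (P₁ : Subgroup ↥H).map π := rfl
  have hcm : ((P₁ : Subgroup ↥H).map π).comap π = (P₁ : Subgroup ↥H) := by
    rw [Subgroup.comap_map_eq, hker, sup_of_le_left hQ₁P₁]
  -- the normalizer of S centralizes S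
  have hcent : Subgroup.normalizer ((S : Subgroup (↥H ⧸ Q₁)) : Set (↥H ⧸ Q₁)) ≤ Subgroup.centralizer S := by
    intro x hx
    obtain ⟨m, rfl⟩ := hπs x
    have hx' := Subgroup.mem_normalizer_iff.mp hx
    have hmP₁ : ∀ g : ↥H, g ∈ (P₁ : Subgroup ↥H) ↔ m * g * m⁻¹ ∈ (P₁ : Subgroup ↥H) := by
      intro g
      constructor
      · intro hg
        have h9 := (hx' (π g)).mp (by rw [hScoe]; exact mem_map_of_mem π hg)
        rw [← hcm, mem_comap, map_mul, map_mul, map_inv]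
        rw [hScoe] at h9
        exact h9
      · intro hg
        have h9 : π m * π g * (π m)⁻¹ ∈ (S : Subgroup (↥H ⧸ Q₁)) := by
          rw [← map_inv, ← map_mul, ← map_mul, hScoe]
          exact mem_map_of_mem π hg
        have h10 := (hx' (π g)).mpr h9
        rw [← hcm, mem_comap]
        rw [hScoe] at h10
        exact h10
    have hmR : (↑m : G) ∈ R := by
      rw [hRdef, Subgroup.mem_normalizer_iff]
      intro y
      constructor
      · intro hy
        have h11 := (hmP₁ ⟨y, hPH hy⟩).mp (by rw [hP₁coe, mem_subgroupOf]; exact hy)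
        rw [hP₁coe, mem_subgroupOf] at h11
        exact h11
      · intro hy
        set z : ↥H := ⟨(↑m : G) * y * (↑m : G)⁻¹, hPH hy⟩ with hzdef
        have h13 := (hmP₁ (m⁻¹ * z * m)).mpr ?_
        · rw [hP₁coe, mem_subgroupOf] at h13
          have h14 : ((m⁻¹ * z * m : ↥H) : G) = y := by
            show (↑m : G)⁻¹ * ((↑m : G) * y * (↑m : G)⁻¹) * (↑m : G) = y
            group
          rwa [h14] at h13
        · have h12 : m * (m⁻¹ * z * m) * m⁻¹ = z := by group
          rw [h12, hP₁coe, mem_subgroupOf]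
          exact hy
    rw [Subgroup.mem_centralizer_iff]
    rintro y hy
    have hy' : y ∈ (S : Subgroup (↥H ⧸ Q₁)) := hy
    rw [hScoe] at hy'
    obtain ⟨g, hgP₁, rfl⟩ := hy'
    have hgP : (↑g : G) ∈ (P : Subgroup G) := hgP₁
    rw [← map_mul, ← map_mul]
    refine (QuotientGroup.mk'_eq_mk' Q₁).mpr ⟨m⁻¹ * g⁻¹ * m * g, ?_, by group⟩
    have h15 := hfus m⁻¹ (R.inv_mem hmR) (↑g)⁻¹ ((P : Subgroup G).inv_mem hgP)
    simp only [InvMemClass.coe_inv, inv_inv] at h15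
    rw [hQ₁def, mem_subgroupOf]
    have h16 : ((m⁻¹ * g⁻¹ * m * g : ↥H) : G)
        = (↑m : G)⁻¹ * (↑g : G)⁻¹ * (↑m : G) * (↑g : G) := by
      push_cast
      group
    rw [h16]
    exact h15
  -- Burnside's normal p-complement theorem in the quotient
  set Kbar := (MonoidHom.transferSylow S hcent).ker with hKbardef
  have hKc : IsComplement' Kbar (S : Subgroup (↥H ⧸ Q₁)) :=
    MonoidHom.ker_transferSylow_isComplement' S hcent
  haveI hKbarnorm : Kbar.Normal := MonoidHom.normal_ker _
  -- L : preimage of Kbar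
  set L : Subgroup ↥H := Kbar.comap π with hLdef
  haveI hLnorm : L.Normal := hKbarnorm.comap π
  have hQ₁L : Q₁ ≤ L := by
    intro x hx
    have h17 : π x = 1 := by
      rw [← MonoidHom.mem_ker, hker]
      exact hx
    rw [hLdef, mem_comap, h17]
    exact Kbar.one_mem
  have hLmap : L.map π = Kbar := Subgroup.map_comap_eq_self_of_surjective hπs _
  have cQ₁ : Nat.card Q₁ = Nat.card Q :=
    Nat.card_congr (Subgroup.subgroupOfEquivOfLe hQH).toEquiv
  have hcL : Nat.card L = Nat.card Kbar * Nat.card Q := by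
    have h18 := card_map_ker_le π L (by rw [hker]; exact hQ₁L)
    rwa [hLmap, hker, cQ₁] at h18
  have hQpos : 0 < Nat.card Q := Nat.card_pos
  have hpKbar : ¬ p ∣ Nat.card Kbar := by
    rw [← hKc.index_eq_card]
    exact S.not_dvd_index
  have cP₁ : Nat.card (P₁ : Subgroup ↥H)
      = Nat.card (S : Subgroup (↥H ⧸ Q₁)) * Nat.card Q := by
    have h19 := card_map_ker_le π (P₁ : Subgroup ↥H) (by rw [hker]; exact hQ₁P₁)
    rwa [← hScoe, hker, cQ₁] at h19
  have cH : Nat.card ↥H = Nat.card Kbar * Nat.card (S : Subgroup (↥H ⧸ Q₁)) * Nat.card Q := by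
    have h20 := Subgroup.card_eq_card_quotient_mul_card_subgroup Q₁
    rw [h20, ← hKc.card_mul, cQ₁]
  -- Schur-Zassenhaus in L
  set QL : Subgroup ↥L := Q₁.subgroupOf L with hQLdef
  haveI hQLnorm : QL.Normal := Subgroup.normal_subgroupOf
  have cQL : Nat.card QL = Nat.card Q := by
    rw [hQLdef, Nat.card_congr (Subgroup.subgroupOfEquivOfLe hQ₁L).toEquiv, cQ₁]
  have hQLidx : QL.index = Nat.card Kbar := by
    have h21 := Subgroup.card_mul_index QL
    rw [cQL] at h21
    have h22 : Nat.card Q * QL.index = Nat.card Q * Nat.card Kbar := by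
      rw [h21, hcL]; ring
    exact Nat.eq_of_mul_eq_mul_left hQpos h22
  have hQp : IsPGroup p ↥Q := P.isPGroup'.to_le hQP
  obtain ⟨kq, hkq⟩ := (IsPGroup.iff_card (p := p) (G := ↥Q)).mp hQp
  have hcoQL : Nat.Coprime (Nat.card QL) QL.index := by
    rw [cQL, hQLidx, hkq]
    exact Nat.Coprime.pow_left _ ((Nat.Prime.coprime_iff_not_dvd Fact.out).mpr hpKbar)
  obtain ⟨M₀, hM₀⟩ := Subgroup.exists_right_complement'_of_coprime hcoQL
  -- good complements
  set IsGood : Subgroup ↥H → Prop :=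
    fun M => M ≤ L ∧ IsComplement' QL (M.subgroupOf L) with hIsGood
  have hMa : IsGood (M₀.map L.subtype) := by
    constructor
    · exact map_subtype_le M₀
    · have h23 : (M₀.map L.subtype).subgroupOf L = M₀ :=
        Subgroup.comap_map_eq_self_of_injective (Subgroup.subtype_injective L) M₀
      rw [h23]
      exact hM₀
  have hpQ₁ : IsPGroup p ↥Q₁ := hQp.of_equiv (Subgroup.subgroupOfEquivOfLe hQH).symm
  have hpQL : IsPGroup p ↥QL := hpQ₁.of_equiv (Subgroup.subgroupOfEquivOfLe hQ₁L).symm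
  -- conjugates of good subgroups are good
  have hgood_conj : ∀ M : Subgroup ↥H, IsGood M → ∀ h : ↥H,
      IsGood (M.map (MulAut.conj h).toMonoidHom) := by
    intro M hM h
    have hML : M ≤ L := hM.1
    have hMhL : M.map (MulAut.conj h).toMonoidHom ≤ L := by
      rintro x ⟨y, hy, rfl⟩
      exact hLnorm.conj_mem y (hML hy) h
    refine ⟨hMhL, ?_⟩
    have cM : Nat.card ((M.map (MulAut.conj h).toMonoidHom).subgroupOf L)
        = Nat.card (M.subgroupOf L) := by
      rw [Nat.card_congr (Subgroup.subgroupOfEquivOfLe hMhL).toEquiv,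
        Nat.card_congr (Subgroup.subgroupOfEquivOfLe hML).toEquiv]
      exact (Nat.card_congr (Subgroup.equivMapOfInjective M _
        (MulAut.conj h).injective).toEquiv).symm
    have hmul : Nat.card QL * Nat.card ((M.map (MulAut.conj h).toMonoidHom).subgroupOf L)
        = Nat.card ↥L := by
      rw [cM, hM.2.card_mul]
    have hcop : Nat.Coprime (Nat.card QL)
        (Nat.card ((M.map (MulAut.conj h).toMonoidHom).subgroupOf L)) := by
      rw [cM, ← hM.2.symm.index_eq_card]
      exact hcoQL
    exact isComplement'_of_coprime hmul hcop
  -- conjugacy of good complements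
  have hconjM : ∀ M M' : Subgroup ↥H, IsGood M → IsGood M' →
      ∃ l : ↥L, M.map (MulAut.conj (↑l : ↥H)).toMonoidHom = M' := by
    intro M M' hM hM'
    obtain ⟨l, hl⟩ := conj_complements_of_isPGroup p (Nat.card QL) ↥L QL
      (M.subgroupOf L) (M'.subgroupOf L) inferInstance le_rfl hpQL hcoQL hM.2 hM'.2
    refine ⟨l, ?_⟩
    have h24 := congrArg (Subgroup.map L.subtype) hl
    rw [map_conj_map L.subtype l (M.subgroupOf L)] at h24
    simp only [Subgroup.subgroupOf_map_subtype] at h24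
    rw [inf_of_le_left hM.1, inf_of_le_left hM'.1] at h24
    exact h24
  -- choose a good complement whose normalizer contains a Sylow inside P₁
  obtain ⟨Sb⟩ : Nonempty (Sylow p ↥(Subgroup.normalizer ((M₀.map L.subtype : Subgroup ↥H) : Set ↥H))) := Sylow.nonempty
  set Na := Subgroup.normalizer ((M₀.map L.subtype : Subgroup ↥H) : Set ↥H) with hNadef
  set SbH : Subgroup ↥H := (Sb : Subgroup ↥Na).map Na.subtype with hSbHdef
  have hpSbH : IsPGroup p ↥SbH := Sb.isPGroup'.map Na.subtype
  obtain ⟨T, hT⟩ := hpSbH.exists_le_sylow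
  obtain ⟨h, hh⟩ : ∃ h : ↥H, h • T = P₁ := MulAction.exists_smul_eq ↥H T P₁
  set cjh := (MulAut.conj h).toMonoidHom with hcjhdef
  set M : Subgroup ↥H := (M₀.map L.subtype).map cjh with hMdef
  have hMgood : IsGood M := hgood_conj _ hMa h
  set N' : Subgroup ↥H := Na.map cjh with hN'def
  have hN'eq : Subgroup.normalizer (M : Set ↥H) = N' :=
    (Subgroup.map_equiv_normalizer_eq (M₀.map L.subtype) (MulAut.conj h)).symm
  have hMN' : M ≤ N' := by rw [← hN'eq]; exact le_normalizer
  set e : ↥Na ≃* ↥N' := MulEquiv.subgroupMap (MulAut.conj h : ↥H ≃* ↥H) Na with hedef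
  have hes : Function.Surjective (e.toMonoidHom : ↥Na →* ↥N') := fun y => e.surjective y
  set S₀ : Sylow p ↥N' := Sylow.mapSurjective hes Sb with hS₀def
  have hS₀coe : (S₀ : Subgroup ↥N') = (Sb : Subgroup ↥Na).map e.toMonoidHom := rfl
  set S₀H : Subgroup ↥H := (S₀ : Subgroup ↥N').map N'.subtype with hS₀Hdef
  have hcompat : N'.subtype.comp e.toMonoidHom = cjh.comp Na.subtype := by
    ext x; rfl
  have hS₀H2 : S₀H = SbH.map cjh := by
    rw [hS₀Hdef, hS₀coe, Subgroup.map_map, hcompat, ← Subgroup.map_map, hSbHdef]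
  have hTP₁ : (T : Subgroup ↥H).map cjh = (P₁ : Subgroup ↥H) := by
    rw [← hh, Sylow.coe_subgroup_smul]
    ext x
    rw [Subgroup.mem_smul_pointwise_iff_exists]
    simp [Subgroup.mem_map, MulAut.smul_def, hcjhdef, MulAut.conj_apply]
  have hS₀P₁ : S₀H ≤ (P₁ : Subgroup ↥H) := by
    rw [hS₀H2, ← hTP₁]
    exact Subgroup.map_mono hT
  -- normal p-subgroups lie in Sylow subgroups
  haveI hWnorm : (Q₁.subgroupOf N').Normal := Subgroup.normal_subgroupOf
  have hpW : IsPGroup p ↥(Q₁.subgroupOf N') := by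
    rw [← Subgroup.inf_subgroupOf_right]
    exact (hpQ₁.to_le inf_le_left).of_equiv (Subgroup.subgroupOfEquivOfLe inf_le_right).symm
  have hWS₀ : Q₁.subgroupOf N' ≤ (S₀ : Subgroup ↥N') := by
    obtain ⟨T₂, hT₂⟩ := hpW.exists_le_sylow
    obtain ⟨n₂, hn₂⟩ : ∃ n₂ : ↥N', n₂ • T₂ = S₀ := MulAction.exists_smul_eq ↥N' T₂ S₀
    intro w hw
    have hmem : n₂⁻¹ * w * n₂ ∈ Q₁.subgroupOf N' := by
      have h31 := hWnorm.conj_mem w hw n₂⁻¹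
      simpa using h31
    have h32 : w ∈ (↑(n₂ • T₂) : Subgroup ↥N') := by
      rw [Sylow.coe_subgroup_smul, Subgroup.mem_smul_pointwise_iff_exists]
      refine ⟨n₂⁻¹ * w * n₂, hT₂ hmem, ?_⟩
      rw [MulAut.smul_def, MulAut.conj_apply]
      group
    rwa [hn₂] at h32
  -- conjugation composition and normalizer membership helpers
  have hconj_comp : ∀ (a b : ↥H) (X : Subgroup ↥H),
      (X.map (MulAut.conj b).toMonoidHom).map (MulAut.conj a).toMonoidHom
        = X.map (MulAut.conj (a * b)).toMonoidHom := by
    intro a b X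
    rw [Subgroup.map_map]
    congr 1
    ext x
    simp [MulAut.conj, mul_assoc]
  have hmem_norm : ∀ (X : Subgroup ↥H) (z : ↥H),
      X.map (MulAut.conj z).toMonoidHom = X → z ∈ Subgroup.normalizer (X : Set ↥H) := by
    intro X z hz
    rw [Subgroup.mem_normalizer_iff]
    intro g
    constructor
    · intro hg
      have : (MulAut.conj z) g ∈ X := by
        rw [← hz]; exact mem_map_of_mem _ hg
      rwa [MulAut.conj_apply] at this
    · intro hg
      rw [← hz] at hg
      obtain ⟨y, hy, hyz⟩ := hg
      simp only [MulEquiv.coe_toMonoidHom, MulAut.conj_apply] at hyz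
      have h33 : y = g := mul_left_cancel (mul_right_cancel hyz)
      rwa [← h33]
  -- Frattini-type decomposition H = Q₁ * N'
  have hdecomp : ∀ x : ↥H, ∃ q ∈ Q₁, ∃ w ∈ N', x = q * w := by
    intro x
    obtain ⟨l, hl⟩ := hconjM M (M.map (MulAut.conj x).toMonoidHom) hMgood
      (hgood_conj M hMgood x)
    have h25 : M.map (MulAut.conj (x⁻¹ * ↑l)).toMonoidHom = M := by
      rw [← hconj_comp, hl, hconj_comp, inv_mul_cancel]
      have h34 : (MulAut.conj (1 : ↥H)).toMonoidHom = MonoidHom.id _ := by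
        ext y; simp
      rw [h34, Subgroup.map_id]
    have h26 : x⁻¹ * ↑l ∈ N' := by
      rw [← hN'eq]
      exact hmem_norm M _ h25
    have hlq := hMgood.2
    set lq := (hlq.equiv l).1 with hlqdef
    set lm := (hlq.equiv l).2 with hlmdef
    have hlqm : ((lq : ↥L) : ↥H) * ((lm : ↥L) : ↥H) = (l : ↥H) := by
      have h35 := hlq.equiv_fst_mul_equiv_snd l
      exact congrArg (fun z : ↥L => (z : ↥H)) h35
    refine ⟨((lq : ↥L) : ↥H), lq.2, ((lm : ↥L) : ↥H) * ((↑l : ↥H)⁻¹ * x), ?_, ?_⟩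
    · exact N'.mul_mem (hMN' lm.2) (by simpa using N'.inv_mem h26)
    · rw [← mul_assoc, ← mul_assoc, hlqm]
      group
  -- the image of S₀ in the quotient is S
  have hf₂s : Function.Surjective (π.comp N'.subtype) := by
    intro y
    obtain ⟨x, rfl⟩ := hπs y
    obtain ⟨q, hq, w, hw, rfl⟩ := hdecomp x
    refine ⟨⟨w, hw⟩, ?_⟩
    show π w = π (q * w)
    rw [map_mul]
    have h36 : π q = 1 := by rw [← MonoidHom.mem_ker, hker]; exact hq
    rw [h36, one_mul]
  set Sc : Sylow p (↥H ⧸ Q₁) := Sylow.mapSurjective hf₂s S₀ with hScdef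
  have hSccoe : (Sc : Subgroup (↥H ⧸ Q₁)) = S₀H.map π := by
    show ((S₀ : Subgroup ↥N').map (π.comp N'.subtype)) = S₀H.map π
    rw [← Subgroup.map_map]
  have hScS : (Sc : Subgroup (↥H ⧸ Q₁)) = (S : Subgroup (↥H ⧸ Q₁)) := by
    have hle : (Sc : Subgroup (↥H ⧸ Q₁)) ≤ (S : Subgroup (↥H ⧸ Q₁)) := by
      rw [hSccoe, hScoe]
      exact Subgroup.map_mono hS₀P₁
    have hcards : Nat.card (S : Subgroup (↥H ⧸ Q₁))
        ≤ Nat.card (Sc : Subgroup (↥H ⧸ Q₁)) := by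
      rw [Sc.card_eq_multiplicity, S.card_eq_multiplicity]
    exact Subgroup.eq_of_le_of_card_ge hle hcards
  -- P₁ = Q₁ ⊔ S₀H
  have hP₁sup : (P₁ : Subgroup ↥H) ≤ Q₁ ⊔ S₀H := by
    intro x hx
    have hπx : π x ∈ (Sc : Subgroup (↥H ⧸ Q₁)) := by
      rw [hScS, hScoe]
      exact mem_map_of_mem π hx
    rw [hSccoe] at hπx
    obtain ⟨s, hs, hseq⟩ := hπx
    have hz : s⁻¹ * x ∈ Q₁ := by
      rw [← hker, MonoidHom.mem_ker, map_mul, map_inv, hseq]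
      simp
    have h37 : x = s * (s⁻¹ * x) := by group
    rw [h37]
    exact Subgroup.mul_mem _ (Subgroup.mem_sup_right hs) (Subgroup.mem_sup_left hz)
  have hsup_eq : Q₁ ⊔ S₀H = (P₁ : Subgroup ↥H) :=
    le_antisymm (sup_le hQ₁P₁ hS₀P₁) hP₁sup
  -- transfer to G and apply the Frattini (nongenerator) property
  set S₀G : Subgroup G := S₀H.map H.subtype with hS₀Gdef
  have hmapP : ((P₁ : Subgroup ↥H)).map H.subtype = (P : Subgroup G) := by
    rw [hP₁coe, Subgroup.subgroupOf_map_subtype, inf_of_le_left hPH]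
  have hmapQ : Q₁.map H.subtype = Q := by
    rw [hQ₁def, Subgroup.subgroupOf_map_subtype, inf_of_le_left hQH]
  have hPG : (P : Subgroup G) = Q ⊔ S₀G := by
    rw [← hmapP, ← hsup_eq, Subgroup.map_sup, hmapQ]
  have hS₀GP : S₀G ≤ (P : Subgroup G) := by
    rw [hPG]; exact le_sup_right
  have hQsubP : Q.subgroupOf (P : Subgroup G) ≤ frattini ↥(P : Subgroup G) := by
    have h27 := Subgroup.comap_mono (f := (P : Subgroup G).subtype) hΦ
    rwa [Subgroup.comap_map_eq_self_of_injective (Subgroup.subtype_injective _)] at h27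
  have htopP : Q.subgroupOf (P : Subgroup G) ⊔ S₀G.subgroupOf (P : Subgroup G) = ⊤ := by
    apply Subgroup.map_injective (Subgroup.subtype_injective (P : Subgroup G))
    rw [Subgroup.map_sup, Subgroup.subgroupOf_map_subtype, Subgroup.subgroupOf_map_subtype,
      inf_of_le_left hQP, inf_of_le_left hS₀GP, ← hPG, ← MonoidHom.range_eq_map,
      Subgroup.range_subtype]
  haveI : Finite (Subgroup ↥(P : Subgroup G)) :=
    Finite.of_injective _ SetLike.coe_injective
  have hfr : S₀G.subgroupOf (P : Subgroup G) ⊔ frattini ↥(P : Subgroup G) = ⊤ := by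
    rw [eq_top_iff, ← htopP]
    apply sup_le
    · exact le_trans hQsubP le_sup_right
    · exact le_sup_left
  have hX : S₀G.subgroupOf (P : Subgroup G) = ⊤ := frattini_nongenerating hfr
  have hPS₀G : (P : Subgroup G) ≤ S₀G := Subgroup.subgroupOf_eq_top.mp hX
  have hP₁N' : (P₁ : Subgroup ↥H) ≤ N' := by
    intro x hx
    have hxP : (↑x : G) ∈ (P : Subgroup G) := hx
    obtain ⟨y, hy, hxy⟩ := hPS₀G hxP
    have h38 : y = x := Subtype.ext hxy
    rw [h38] at hy
    exact (Subgroup.map_subtype_le _) hy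
  -- N' = ⊤, so M is normal
  have hN'top : N' = ⊤ := by
    rw [eq_top_iff]
    intro x _
    obtain ⟨q, hq, w, hw, rfl⟩ := hdecomp x
    exact N'.mul_mem (hP₁N' (hQ₁P₁ hq)) hw
  haveI hMnormal : M.Normal := Subgroup.normalizer_eq_top_iff.mp (hN'eq.trans hN'top)
  -- conclusion
  have cM : Nat.card M = Nat.card Kbar := by
    have h29 : Nat.card (M.subgroupOf L) = Nat.card M :=
      Nat.card_congr (Subgroup.subgroupOfEquivOfLe hMgood.1).toEquiv
    have h28 := hMgood.2.card_mul
    rw [cQL, hcL, h29] at h28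
    apply Nat.eq_of_mul_eq_mul_left hQpos
    rw [h28]; ring
  refine ⟨P₁, M, hMnormal, ?_⟩
  apply isComplement'_of_coprime
  · rw [cP₁, cM, cH]; ring
  · obtain ⟨kp, hkp⟩ := (IsPGroup.iff_card (p := p)).mp P₁.isPGroup'
    rw [hkp, cM]
    exact Nat.Coprime.pow_left _ ((Nat.Prime.coprime_iff_not_dvd Fact.out).mpr hpKbar)
end

section
/- Let G be a finite group with Sylow p-subgroup P and let Q ⊴ G be a normal p-subgroup with P' ≤ Q. If N_G(P) is p-nilpotent, then P/Q is contained in the center of N_{G/Q}(P/Q). -/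
theorem image_central_in_normalizer (p : ℕ) [Fact p.Prime] (G : Type*) [Group G] [Finite G]
    (P : Sylow p G) (Q : Subgroup G) (hQ : Q.Normal) (hQp : IsPGroup p Q)
    (hQP : Q ≤ (P : Subgroup G))
    (hP' : (commutator ↥(P : Subgroup G)).map (P : Subgroup G).subtype ≤ Q)
    (hN : IsPNilpotent p (Subgroup.normalizer ((P : Subgroup G) : Set G))) :
    (P : Subgroup G).map (QuotientGroup.mk' Q) ≤
      Subgroup.centralizer ((Subgroup.normalizer (((P : Subgroup G).map (QuotientGroup.mk' Q)) : Set (G ⧸ Q))) : Set (G ⧸ Q)) := by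
  classical
  set Pg : Subgroup G := (P : Subgroup G) with hPg
  set N : Subgroup G := Subgroup.normalizer (Pg : Set G) with hNdef
  have hPle : Pg ≤ N := Subgroup.le_normalizer
  -- Key fact: every element of the normalizer commutes with P modulo Q
  have key : ∀ g ∈ N, ∀ x ∈ Pg, x * g * x⁻¹ * g⁻¹ ∈ Q := by
    obtain ⟨P', K, hKn, hc⟩ := hN
    set Pn : Sylow p ↥N := P.subtype hPle with hPnDef
    have hcardPn : Nat.card (Pn : Subgroup ↥N) = p ^ (Nat.card ↥N).factorization p :=
      Sylow.card_eq_multiplicity Pn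
    have hcardP' : Nat.card (P' : Subgroup ↥N) = p ^ (Nat.card ↥N).factorization p :=
      Sylow.card_eq_multiplicity P'
    have hmul : Nat.card (Pn : Subgroup ↥N) * Nat.card K = Nat.card ↥N := by
      rw [hcardPn, ← hcardP']; exact hc.card_mul
    have hNpos : Nat.card ↥N ≠ 0 := Nat.card_pos.ne'
    have hpK : ¬ p ∣ Nat.card K := by
      intro hdvd
      have hdd : p ^ ((Nat.card ↥N).factorization p + 1) ∣ Nat.card ↥N := by
        conv_rhs => rw [← hmul]
        rw [hcardPn, pow_succ]
        exact mul_dvd_mul_left _ hdvd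
      exact Nat.pow_succ_factorization_not_dvd hNpos (Fact.out : p.Prime) hdd
    have hcop : Nat.Coprime (Nat.card (Pn : Subgroup ↥N)) (Nat.card K) := by
      rw [hcardPn]
      exact Nat.Coprime.pow_left _
        (((Fact.out : p.Prime).coprime_iff_not_dvd).mpr hpK)
    have hcomp : Subgroup.IsComplement' (Pn : Subgroup ↥N) K :=
      Subgroup.isComplement'_of_coprime hmul hcop
    have hPnEq : (Pn : Subgroup ↥N) = Pg.subgroupOf N := Sylow.coe_subtype P hPle
    have hPnNormal : (Pn : Subgroup ↥N).Normal := by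
      rw [hPnEq]; exact Subgroup.normal_in_normalizer
    intro g hg x hx
    obtain ⟨⟨y, k⟩, hyk⟩ := (hcomp.existsUnique (⟨g, hg⟩ : ↥N)).exists
    have hxPn : (⟨x, hPle hx⟩ : ↥N) ∈ (Pn : Subgroup ↥N) := by
      rw [hPnEq]; exact hx
    have hcomm : Commute (⟨x, hPle hx⟩ : ↥N) (k : ↥N) :=
      Subgroup.commute_of_normal_of_disjoint _ _ hPnNormal hKn hcomp.disjoint _ _ hxPn k.2
    -- push to G
    have hgEq : ((y : ↥N) : G) * ((k : ↥N) : G) = g := by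
      have := congrArg (Subtype.val) hyk
      simpa using this
    have hcommG : x * ((k : ↥N) : G) = ((k : ↥N) : G) * x := by
      have := congrArg (Subtype.val) hcomm.eq
      simpa using this
    have hkconj : ((k : ↥N) : G) * x⁻¹ * ((k : ↥N) : G)⁻¹ = x⁻¹ := by
      have h0 : Commute x ((k : ↥N) : G) := hcommG
      have h1 : ((k : ↥N) : G) * x⁻¹ = x⁻¹ * ((k : ↥N) : G) := (h0.inv_left.symm).eq
      rw [h1]; group
    have hyP : ((y : ↥N) : G) ∈ Pg := by
      have h4 : (y : ↥N) ∈ Pg.subgroupOf N := by rw [← hPnEq]; exact y.2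
      exact Subgroup.mem_subgroupOf.mp h4
    have hcalc : x * g * x⁻¹ * g⁻¹ = x * ((y : ↥N) : G) * x⁻¹ * ((y : ↥N) : G)⁻¹ := by
      rw [← hgEq]
      calc x * (((y : ↥N) : G) * ((k : ↥N) : G)) * x⁻¹ * (((y : ↥N) : G) * ((k : ↥N) : G))⁻¹
          = x * ((y : ↥N) : G) * (((k : ↥N) : G) * x⁻¹ * ((k : ↥N) : G)⁻¹) * ((y : ↥N) : G)⁻¹ := by
            group
        _ = x * ((y : ↥N) : G) * x⁻¹ * ((y : ↥N) : G)⁻¹ := by rw [hkconj]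
    rw [hcalc]
    open scoped commutatorElement in have hmem : ⁅(⟨x, hx⟩ : ↥Pg), (⟨((y : ↥N) : G), hyP⟩ : ↥Pg)⁆ ∈ commutator ↥Pg :=
      Subgroup.commutator_mem_commutator (Subgroup.mem_top _) (Subgroup.mem_top _)
    exact hP' ⟨_, hmem, rfl⟩
  -- Now conclude in the quotient
  rintro a ⟨x, hx, rfl⟩
  rw [Subgroup.mem_centralizer_iff]
  intro b hb
  obtain ⟨g, rfl⟩ := QuotientGroup.mk'_surjective Q b
  have hb' : (QuotientGroup.mk' Q) g ∈ Subgroup.normalizer ((Pg.map (QuotientGroup.mk' Q) : Subgroup (G ⧸ Q)) : Set (G ⧸ Q)) := hb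
  have hgN : g ∈ N := by
    have h2 : g ∈ Subgroup.normalizer ((Subgroup.comap (QuotientGroup.mk' Q) (Pg.map (QuotientGroup.mk' Q)) : Subgroup G) : Set G) := by
      rw [Subgroup.mem_normalizer_iff] at hb' ⊢
      intro h
      rw [Subgroup.mem_comap, Subgroup.mem_comap, map_mul, map_mul, map_inv]; exact hb' _
    rwa [Subgroup.comap_map_eq_self (by rw [QuotientGroup.ker_mk']; exact hQP)] at h2
  have hcomm := key g hgN x hx
  have hw : (g * x)⁻¹ * (x * g) ∈ Q := by
    have h2 : (g * x)⁻¹ * (x * g * x⁻¹ * g⁻¹) * ((g * x)⁻¹)⁻¹ ∈ Q := hQ.conj_mem _ hcomm _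
    have h3 : (g * x)⁻¹ * (x * g) = (g * x)⁻¹ * (x * g * x⁻¹ * g⁻¹) * ((g * x)⁻¹)⁻¹ := by group
    rw [h3]; exact h2
  rw [← map_mul, ← map_mul, QuotientGroup.mk'_eq_mk']
  exact ⟨(g * x)⁻¹ * (x * g), hw, by group⟩
end

section
/- Let G be a finite group with Sylow p-subgroup P, and suppose K ⊴ G with G = PK and P ∩ K = Q where Q ≤ Φ(P) and Q ⊴ G. If L ≤ K is a complement to Q in K (K = QL, Q ∩ L = 1) with N_P(L)·Q = P, then L is normal in G and is a normal p-complement for G. -/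
theorem complement_is_normal_p_complement (p : ℕ) [Fact p.Prime] (G : Type*) [Group G] [Finite G]
    (P : Sylow p G) (K Q L : Subgroup G)
    (hK : K.Normal) (hPK : (P : Subgroup G) ⊔ K = ⊤) (hPcapK : (P : Subgroup G) ⊓ K = Q)
    (hQΦ : Q ≤ (frattini ↥(P : Subgroup G)).map (P : Subgroup G).subtype) (hQ : Q.Normal)
    (hLK : L ≤ K) (hQL : Q ⊔ L = K) (hQcapL : Q ⊓ L = ⊥)
    (hNPL : ((P : Subgroup G) ⊓ Subgroup.normalizer (L : Set G)) ⊔ Q = (P : Subgroup G)) :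
    L.Normal ∧ (P : Subgroup G) ⊔ L = ⊤ ∧ (P : Subgroup G) ⊓ L = ⊥ := by
  have hQP : Q ≤ (P : Subgroup G) := hPcapK ▸ inf_le_left
  -- Q, as a subgroup of P, is inside the Frattini subgroup of P
  have hQF : Q.subgroupOf (P : Subgroup G) ≤ frattini ↥(P : Subgroup G) := by
    intro x hx
    obtain ⟨y, hy, hyx⟩ := hQΦ hx
    obtain rfl : y = x := Subtype.ext hyx
    exact hy
  -- P normalizes L, via the nongenerating property of the Frattini subgroup
  have hPN : (P : Subgroup G) ≤ Subgroup.normalizer (L : Set G) := by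
    have h1 : ((P : Subgroup G) ⊓ Subgroup.normalizer (L : Set G)).subgroupOf (P : Subgroup G)
        ⊔ Q.subgroupOf (P : Subgroup G) = ⊤ := by
      rw [← Subgroup.subgroupOf_sup inf_le_left hQP, hNPL, Subgroup.subgroupOf_self]
    have h2 : ((P : Subgroup G) ⊓ Subgroup.normalizer (L : Set G)).subgroupOf (P : Subgroup G)
        ⊔ frattini ↥(P : Subgroup G) = ⊤ :=
      top_le_iff.mp (h1 ▸ sup_le_sup_left hQF _)
    have h3 := frattini_nongenerating h2
    intro x hx
    have : (⟨x, hx⟩ : ↥(P : Subgroup G)) ∈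
        ((P : Subgroup G) ⊓ Subgroup.normalizer (L : Set G)).subgroupOf (P : Subgroup G) := h3 ▸ trivial
    exact (Subgroup.mem_subgroupOf.mp this).2
  have hKN : K ≤ Subgroup.normalizer (L : Set G) := by
    rw [← hQL]
    exact sup_le (hQP.trans hPN) Subgroup.le_normalizer
  have hLnormal : L.Normal := by
    rw [← Subgroup.normalizer_eq_top_iff]
    exact top_le_iff.mp (hPK ▸ sup_le hPN hKN)
  refine ⟨hLnormal, ?_, ?_⟩
  · rw [← hPK, ← hQL, ← sup_assoc, sup_of_le_left hQP]
  · apply le_bot_iff.mp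
    calc (P : Subgroup G) ⊓ L ≤ ((P : Subgroup G) ⊓ K) ⊓ L :=
          le_inf (le_inf inf_le_left (inf_le_right.trans hLK)) inf_le_right
      _ = ⊥ := by rw [hPcapK, hQcapL]
end

section
/- Let G be a finite group with Sylow p-subgroup P and suppose the derived subgroup P' is normal in G and G/P' is p-nilpotent. If in addition P' ≤ Φ(P), then G is p-nilpotent. -/
section Auxiliary

open Subgroup MulAction Pointwise

variable {G : Type*} [Group G] [Finite G]

/-- The point of `QuotientDiff` associated to a transversal. -/
def SZpt (N : Subgroup G) [IsMulCommutative N] [N.FiniteIndex]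
    (T : N.LeftTransversal) : N.QuotientDiff := Quotient.mk'' T

lemma smul_SZpt (N : Subgroup G) [IsMulCommutative N] [N.FiniteIndex] [N.Normal]
    (T : N.LeftTransversal) (g : G) :
    g • SZpt N T = SZpt N (MulOpposite.op g⁻¹ • T) := rfl

/-- Any complement of an abelian normal subgroup of coprime order equals the stabilizer of the
corresponding point in `QuotientDiff`. -/
lemma complement_eq_stabilizer (N H : Subgroup G) [N.Normal] [IsMulCommutative N]
    (hco : Nat.Coprime (Nat.card N) N.index) (h : IsComplement' N H) :
    H = stabilizer G (SZpt N ⟨(H : Set G), h.symm⟩) := by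
  set α : N.QuotientDiff := SZpt N ⟨(H : Set G), h.symm⟩ with hα
  have hstab : IsComplement' N (stabilizer G α) :=
    Subgroup.isComplement'_stabilizer_of_coprime hco
  have hle : H ≤ stabilizer G α := by
    intro g hg
    rw [MulAction.mem_stabilizer_iff, hα, smul_SZpt]
    unfold SZpt
    congr 1
    refine Subtype.ext ?_
    show (MulOpposite.op g⁻¹) • (H : Set G) = (H : Set G)
    ext x
    simp only [Set.mem_smul_set]
    constructor
    · rintro ⟨y, hy, rfl⟩
      show y * g⁻¹ ∈ H
      exact mul_mem hy (inv_mem hg)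
    · intro hx
      exact ⟨x * g, mul_mem hx hg, by show (x*g) * g⁻¹ = x; group⟩
  refine Subgroup.eq_of_le_of_card_ge hle (le_of_eq ?_)
  have h1 := h.card_mul
  have h2 := hstab.card_mul
  have hN : 0 < Nat.card N := Nat.card_pos
  exact Nat.eq_of_mul_eq_mul_left hN (h2.trans h1.symm)

/-- Complements of an abelian normal subgroup of coprime order are conjugate. -/
lemma conj_complements (N H₁ H₂ : Subgroup G) [N.Normal] [IsMulCommutative N]
    (hco : Nat.Coprime (Nat.card N) N.index)
    (h₁ : IsComplement' N H₁) (h₂ : IsComplement' N H₂) :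
    ∃ g : G, H₂ = H₁.map (MulAut.conj g).toMonoidHom := by
  obtain ⟨n, hn⟩ := Subgroup.exists_smul_eq hco (SZpt N ⟨(H₁ : Set G), h₁.symm⟩)
    (SZpt N ⟨(H₂ : Set G), h₂.symm⟩)
  refine ⟨(n : G), ?_⟩
  rw [complement_eq_stabilizer N H₂ hco h₂, complement_eq_stabilizer N H₁ hco h₁, ← hn]
  have : (n • SZpt N ⟨(H₁ : Set G), h₁.symm⟩) = ((n : G) • SZpt N ⟨(H₁ : Set G), h₁.symm⟩) := rfl
  rw [this, MulAction.stabilizer_smul_eq_stabilizer_map_conj]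

/-- A characteristic subgroup of a normal subgroup is normal. -/
lemma char_of_normal_is_normal {K : Subgroup G} [K.Normal] (H : Subgroup ↥K)
    [H.Characteristic] : (H.map K.subtype).Normal := by
  constructor
  rintro x hx g
  obtain ⟨h, hh, rfl⟩ := hx
  have hmem : (MulAut.conjNormal g h : ↥K) ∈ H := by
    have := Subgroup.characteristic_iff_map_eq.mp ‹H.Characteristic› (MulAut.conjNormal g)
    rw [← this]
    exact ⟨h, hh, rfl⟩
  refine ⟨MulAut.conjNormal g h, hmem, ?_⟩
  simp [MulAut.conjNormal_apply]

/-- A normal subgroup contained in the Frattini subgroup of a Sylow subgroup is contained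
in the Frattini subgroup of the whole group. -/
lemma normal_le_frattini_of_le_frattini_sylow {p : ℕ} [Fact p.Prime] (P : Sylow p G)
    (N : Subgroup G) [N.Normal]
    (hΦ : N ≤ (frattini ↥(P : Subgroup G)).map (P : Subgroup G).subtype) :
    N ≤ frattini G := by
  have hNP : N ≤ (P : Subgroup G) := hΦ.trans (Subgroup.map_subtype_le _)
  have hNp : IsPGroup p ↥N := P.2.to_le hNP
  refine le_iInf₂ fun M hM => ?_
  by_contra hNM
  -- `N ⊔ M = ⊤` since `M` is a coatom
  have htop : N ⊔ M = ⊤ := by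
    refine hM.2 _ (lt_of_le_of_ne le_sup_right fun h => hNM ?_)
    rw [h]; exact le_sup_left
  -- choose a Sylow `p`-subgroup of `M` containing `N ⊓ M`
  have hNMp : IsPGroup p ↥((N ⊓ M).subgroupOf M) :=
    IsPGroup.of_equiv (IsPGroup.to_inf_left hNp) (Subgroup.subgroupOfEquivOfLe inf_le_right).symm
  obtain ⟨S, hS⟩ := hNMp.exists_le_sylow
  set SG : Subgroup G := (S : Subgroup ↥M).map M.subtype with hSGdef
  have hSGM : SG ≤ M := Subgroup.map_subtype_le _
  have hNMSG : N ⊓ M ≤ SG := by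
    have h' : ((N ⊓ M).subgroupOf M).map M.subtype ≤ SG := Subgroup.map_mono hS
    rwa [Subgroup.subgroupOf_map_subtype, inf_assoc, inf_idem] at h'
  have hinf : N ⊓ SG = N ⊓ M :=
    le_antisymm (inf_le_inf_left N hSGM) (le_inf inf_le_left hNMSG)
  -- `T := N ⊔ SG` is a `p`-group
  set T : Subgroup G := N ⊔ SG with hTdef
  have hTp : IsPGroup p ↥T := IsPGroup.to_sup_of_normal_left hNp (S.2.map M.subtype)
  -- `T` has index prime to `p`
  have hTindex : T.index = (S : Subgroup ↥M).index := by
    have e1 : N.relIndex SG * T.index = N.index := by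
      rw [hTdef, ← Subgroup.relIndex_sup_left]
      exact Subgroup.relIndex_mul_index le_sup_left
    have e2 : N.index = N.relIndex M := by
      rw [← Subgroup.relIndex_top_right, ← htop, Subgroup.relIndex_sup_left]
    have e3 : N.relIndex SG = (N ⊓ M).relIndex SG := by
      rw [← Subgroup.inf_relIndex_right, hinf]
    have e4 : N.relIndex M = (N ⊓ M).relIndex M := (Subgroup.inf_relIndex_right _ _).symm
    have e5 : (N ⊓ M).relIndex SG * SG.relIndex M = (N ⊓ M).relIndex M :=
      Subgroup.relIndex_mul_relIndex _ _ _ hNMSG hSGM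
    have hpos : (N ⊓ M).relIndex SG ≠ 0 :=
      Subgroup.index_ne_zero_of_finite
    have e6 : SG.relIndex M = (S : Subgroup ↥M).index := by
      rw [Subgroup.relIndex, Subgroup.subgroupOf, hSGdef,
        Subgroup.comap_map_eq_self_of_injective M.subtype_injective]
    rw [← e6]
    apply Nat.eq_of_mul_eq_mul_left (Nat.pos_of_ne_zero hpos)
    rw [e5, ← e4, ← e2, ← e1, e3]
  have hTnd : ¬ p ∣ T.index := by
    rw [hTindex]
    exact S.not_dvd_index
  -- hence `T` is a Sylow subgroup
  obtain ⟨P₂, hTP₂⟩ := hTp.exists_le_sylow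
  have hTeq : T = (P₂ : Subgroup G) := by
    refine le_antisymm hTP₂ ?_
    have h1 : T.relIndex P₂ * (P₂ : Subgroup G).index = T.index :=
      Subgroup.relIndex_mul_index hTP₂
    have h2 : T.relIndex P₂ ∣ Nat.card ↥(P₂ : Subgroup G) :=
      Subgroup.index_dvd_card _
    obtain ⟨n, hn⟩ := P₂.2.exists_card_eq
    rw [hn] at h2
    obtain ⟨k, hk, hrel⟩ := (Nat.dvd_prime_pow (Fact.out : p.Prime)).mp h2
    rcases Nat.eq_zero_or_pos k with hk0 | hkpos
    · rw [hk0, pow_zero] at hrel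
      exact (Subgroup.relIndex_eq_one.mp hrel)
    · exfalso
      apply hTnd
      rw [← h1, hrel]
      exact Dvd.dvd.mul_right (dvd_pow_self p hkpos.ne') _
  obtain ⟨g, hg⟩ := MulAction.exists_smul_eq G P₂ P
  have hg' : MulAut.conj g • (P₂ : Subgroup G) = (P : Subgroup G) := by
    rw [← Sylow.coe_subgroup_smul, hg]
  set S₂ : Subgroup G := MulAut.conj g • SG with hS₂def
  have hPsup : (P : Subgroup G) = N ⊔ S₂ := by
    rw [← hg', ← hTeq, hTdef, Subgroup.smul_sup, Subgroup.Normal.conj_smul_eq_self]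
  -- use the Frattini nongenerating property inside `P`
  have hS₂P : S₂ ≤ (P : Subgroup G) := hPsup ▸ le_sup_right
  have hΦ' : N.subgroupOf (P : Subgroup G) ≤ frattini ↥(P : Subgroup G) := by
    intro x hx
    have : (x : G) ∈ (frattini ↥(P : Subgroup G)).map (P : Subgroup G).subtype := hΦ hx
    obtain ⟨y, hy, hyx⟩ := this
    rwa [show y = x from Subtype.ext hyx] at hy
  have hsup' : N.subgroupOf (P : Subgroup G) ⊔ S₂.subgroupOf (P : Subgroup G) = ⊤ := by
    apply Subgroup.map_injective (P : Subgroup G).subtype_injective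
    rw [Subgroup.map_sup, Subgroup.subgroupOf_map_subtype, Subgroup.subgroupOf_map_subtype]
    simp only [inf_eq_left.mpr hNP, inf_eq_left.mpr hS₂P]
    rw [← hPsup, ← MonoidHom.range_eq_map, Subgroup.range_subtype]
  have hS₂top : S₂.subgroupOf (P : Subgroup G) = ⊤ := by
    apply frattini_nongenerating
    rw [eq_top_iff, ← hsup']
    exact sup_le (le_sup_of_le_right hΦ') le_sup_left
  have hPS₂ : (P : Subgroup G) ≤ S₂ := by
    rw [← Subgroup.subgroupOf_eq_top]
    exact hS₂top
  -- conclude `N ≤ M`, contradiction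
  apply hNM
  have : N ≤ MulAut.conj g • M := (hNP.trans hPS₂).trans
    (Subgroup.pointwise_smul_le_pointwise_smul_iff.mpr hSGM)
  have h2 := Subgroup.pointwise_smul_le_pointwise_smul_iff (a := (MulAut.conj g)⁻¹).mpr this
  rw [inv_smul_smul] at h2
  rwa [← map_inv, Subgroup.Normal.conj_smul_eq_self] at h2

omit [Finite G] in
lemma IsPNilpotent.of_mulEquiv {p : ℕ} [Fact p.Prime] [Finite G] {H : Type*} [Group H]
    (e : G ≃* H) : IsPNilpotent p G → IsPNilpotent p H := by
  rintro ⟨P, K, hn, hc⟩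
  haveI : Finite H := Finite.of_equiv G e.toEquiv
  have hsurj : Function.Surjective ⇑e.toMonoidHom := by simpa using e.surjective
  refine ⟨P.mapSurjective hsurj, K.map e.toMonoidHom,
    hn.map e.toMonoidHom hsurj, ?_⟩
  rw [Sylow.coe_mapSurjective]
  have hcP : Nat.card ((P : Subgroup G).map e.toMonoidHom) = Nat.card (P : Subgroup G) :=
    Nat.card_congr (Subgroup.equivMapOfInjective _ e.toMonoidHom e.injective).toEquiv.symm
  have hcK : Nat.card (K.map e.toMonoidHom) = Nat.card K :=
    Nat.card_congr (Subgroup.equivMapOfInjective _ e.toMonoidHom e.injective).toEquiv.symm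
  have hcG : Nat.card G = Nat.card H := Nat.card_congr e.toEquiv
  refine Subgroup.isComplement'_of_coprime ?_ ?_
  · rw [hcP, hcK, ← hcG, hc.card_mul]
  · rw [hcP, hcK]
    have h1 : Nat.card K = (P : Subgroup G).index := (hc.symm.index_eq_card).symm
    rw [h1]
    exact P.card_coprime_index

omit [Finite G] in
lemma map_conj_subtype {K : Subgroup G} (k : ↥K) (A : Subgroup ↥K) :
    (A.map (MulAut.conj k).toMonoidHom).map K.subtype =
      (A.map K.subtype).map (MulAut.conj (k : G)).toMonoidHom := by
  ext x
  simp only [Subgroup.mem_map, MulAut.conj_apply, MulEquiv.coe_toMonoidHom,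
    Subgroup.coe_subtype, exists_exists_and_eq_and]
  constructor
  · rintro ⟨a, ha, rfl⟩
    exact ⟨a, ha, rfl⟩
  · rintro ⟨a, ha, rfl⟩
    exact ⟨a, ha, rfl⟩

omit [Finite G] in
lemma mem_normalizer_of_smul_eq {H : Subgroup G} {a : G}
    (h : MulAut.conj a • H = H) : a ∈ Subgroup.normalizer (H : Set G) := by
  rw [Subgroup.mem_normalizer_iff]
  intro x
  constructor
  · intro hx
    rw [← h]
    exact ⟨x, hx, rfl⟩
  · intro hx
    rw [← h] at hx
    obtain ⟨y, hy, hxy⟩ := hx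
    have : y = x := by
      have := hxy
      change a * y * a⁻¹ = a * x * a⁻¹ at this
      exact mul_left_cancel (mul_right_cancel this)
    rwa [← this]

lemma abelian_case {p : ℕ} [Fact p.Prime] (N : Subgroup G) [N.Normal] [IsMulCommutative N]
    (hpN : IsPGroup p ↥N) (hfr : N ≤ frattini G) (hquot : IsPNilpotent p (G ⧸ N)) :
    IsPNilpotent p G := by
  obtain ⟨Q, Kbar, hKbarnorm, hKbarcomp⟩ := hquot
  set K : Subgroup G := Kbar.comap (QuotientGroup.mk' N) with hKdef
  haveI hKnorm : K.Normal := hKbarnorm.comap _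
  have hNK : N ≤ K := by
    intro x hx
    show QuotientGroup.mk' N x ∈ Kbar
    have : QuotientGroup.mk' N x = 1 := by
      rw [← MonoidHom.mem_ker, QuotientGroup.ker_mk']; exact hx
    rw [this]; exact Kbar.one_mem
  -- cardinalities
  have cardK : Nat.card ↥K = Nat.card ↥N * Nat.card ↥Kbar := by
    have e := QuotientGroup.preimageMkEquivSubgroupProdSet N (Kbar : Set (G ⧸ N))
    have : Nat.card ↥K = Nat.card (↥N × ↥(Kbar : Set (G ⧸ N))) := Nat.card_congr e
    simpa [Nat.card_prod] using this
  have hQKbar : (Q : Subgroup (G ⧸ N)).index = Nat.card ↥Kbar := hKbarcomp.symm.index_eq_card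
  have hpKbar : ¬ p ∣ Nat.card ↥Kbar := by
    rw [← hQKbar]; exact Q.not_dvd_index
  obtain ⟨b, hb⟩ := hpN.exists_card_eq
  have hcopN : Nat.Coprime (Nat.card ↥N) (Nat.card ↥Kbar) := by
    rw [hb]
    exact Nat.Coprime.pow_left b (((Fact.out : p.Prime).coprime_iff_not_dvd).mpr hpKbar)
  -- the complement inside K via Schur-Zassenhaus
  set nN : Subgroup ↥K := N.subgroupOf K with hnNdef
  have cardnN : Nat.card ↥nN = Nat.card ↥N :=
    Nat.card_congr (Subgroup.subgroupOfEquivOfLe hNK).toEquiv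
  have hNpos : 0 < Nat.card ↥N := Nat.card_pos
  have indexnN : nN.index = Nat.card ↥Kbar := by
    have h1 : nN.index * Nat.card ↥nN = Nat.card ↥K := Subgroup.index_mul_card nN
    rw [cardnN, cardK, mul_comm nN.index _] at h1
    exact Nat.eq_of_mul_eq_mul_left hNpos h1
  have hcop' : Nat.Coprime (Nat.card ↥nN) nN.index := by rw [cardnN, indexnN]; exact hcopN
  obtain ⟨H', hH'⟩ := Subgroup.exists_right_complement'_of_coprime hcop'
  set H : Subgroup G := H'.map K.subtype with hHdef
  have hHK : H ≤ K := Subgroup.map_subtype_le _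
  have cardH : Nat.card ↥H = Nat.card ↥Kbar := by
    have e1 : Nat.card ↥H = Nat.card ↥H' :=
      Nat.card_congr (Subgroup.equivMapOfInjective _ _ K.subtype_injective).toEquiv.symm
    rw [e1, ← hH'.symm.index_eq_card, indexnN]
  -- all conjugates of H are conjugate to H by an element of K
  have hconj : ∀ g : G, ∃ k : ↥K, MulAut.conj g • H = MulAut.conj (k : G) • H := by
    intro g
    set S₂ : Subgroup G := MulAut.conj g • H with hS₂def
    have hS₂K : S₂ ≤ K := by
      calc S₂ ≤ MulAut.conj g • K :=
            Subgroup.pointwise_smul_le_pointwise_smul_iff.mpr hHK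
        _ = K := Subgroup.Normal.conj_smul_eq_self g K
    have cardS₂ : Nat.card ↥S₂ = Nat.card ↥Kbar := by
      rw [← cardH, hS₂def, Subgroup.pointwise_smul_def]
      exact (Nat.card_congr (Subgroup.equivMapOfInjective _ _
        (MulAut.conj g).injective).toEquiv.symm)
    have comp₂ : Subgroup.IsComplement' nN (S₂.subgroupOf K) := by
      refine Subgroup.isComplement'_of_coprime ?_ ?_
      · rw [cardnN, Nat.card_congr (Subgroup.subgroupOfEquivOfLe hS₂K).toEquiv, cardS₂, cardK]
      · rw [cardnN, Nat.card_congr (Subgroup.subgroupOfEquivOfLe hS₂K).toEquiv, cardS₂]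
        exact hcopN
    obtain ⟨k, hk⟩ := conj_complements nN H' (S₂.subgroupOf K) hcop' hH' comp₂
    refine ⟨k, ?_⟩
    have h2 := congrArg (Subgroup.map K.subtype) hk
    rw [Subgroup.subgroupOf_map_subtype, inf_eq_left.mpr hS₂K, map_conj_subtype] at h2
    rw [Subgroup.pointwise_smul_def]
    exact h2
  -- hence G = K ⊔ N_G(H)
  have htop : K ⊔ Subgroup.normalizer (H : Set G) = ⊤ := by
    rw [eq_top_iff]
    intro g _
    obtain ⟨k, hk⟩ := hconj g
    have hmem : (k : G)⁻¹ * g ∈ Subgroup.normalizer (H : Set G) := by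
      apply mem_normalizer_of_smul_eq
      rw [map_mul, map_inv, mul_smul, hk, inv_smul_smul]
    have : g = (k : G) * ((k : G)⁻¹ * g) := by group
    rw [this]
    exact mul_mem (Subgroup.mem_sup_left k.2) (Subgroup.mem_sup_right hmem)
  -- K = N ⊔ H
  have hKsup : K = N ⊔ H := by
    have h1 : nN ⊔ H' = ⊤ := hH'.sup_eq_top
    have := congrArg (Subgroup.map K.subtype) h1
    rw [Subgroup.map_sup, Subgroup.subgroupOf_map_subtype, inf_eq_left.mpr hNK, ← hHdef,
      ← MonoidHom.range_eq_map, Subgroup.range_subtype] at this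
    exact this.symm
  -- nongenerating property: H is normal
  have hnormalizer : Subgroup.normalizer (H : Set G) = ⊤ := by
    apply frattini_nongenerating
    rw [eq_top_iff, ← htop, hKsup]
    refine sup_le (sup_le ?_ ?_) ?_
    · exact le_sup_of_le_right hfr
    · exact le_sup_of_le_left Subgroup.le_normalizer
    · exact le_sup_left
  haveI hHnormal : H.Normal := Subgroup.normalizer_eq_top_iff.mp hnormalizer
  -- conclude with any Sylow subgroup
  obtain ⟨P₀⟩ : Nonempty (Sylow p G) := inferInstance
  obtain ⟨a, ha⟩ : ∃ a, Nat.card (P₀ : Subgroup G) = p ^ a := P₀.2.exists_card_eq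
  obtain ⟨c, hc⟩ : ∃ c, Nat.card (Q : Subgroup (G ⧸ N)) = p ^ c := Q.2.exists_card_eq
  have hGcard : Nat.card G =
      Nat.card ↥N * (Nat.card (Q : Subgroup (G ⧸ N)) * Nat.card ↥Kbar) := by
    rw [Subgroup.card_eq_card_quotient_mul_card_subgroup N, ← hKbarcomp.card_mul]
    ring
  have hGcard2 : Nat.card (P₀ : Subgroup G) * (P₀ : Subgroup G).index = Nat.card G :=
    Subgroup.card_mul_index _
  have hcopP : Nat.Coprime (Nat.card (P₀ : Subgroup G)) ((P₀ : Subgroup G).index) := P₀.card_coprime_index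
  -- identify the p-parts
  have key : (P₀ : Subgroup G).index = Nat.card ↥Kbar := by
    have h1 : Nat.card (P₀ : Subgroup G) * (P₀ : Subgroup G).index = p ^ (b + c) * Nat.card ↥Kbar := by
      rw [hGcard2, hGcard, hb, hc, pow_add]; ring
    have hcop1 : Nat.Coprime (Nat.card (P₀ : Subgroup G)) (Nat.card ↥Kbar) := by
      rw [ha]
      exact Nat.Coprime.pow_left a (((Fact.out : p.Prime).coprime_iff_not_dvd).mpr hpKbar)
    have hpi : ¬ p ∣ (P₀ : Subgroup G).index := P₀.not_dvd_index
    have hcop2 : Nat.Coprime (p ^ (b + c)) ((P₀ : Subgroup G).index) :=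
      Nat.Coprime.pow_left _ (((Fact.out : p.Prime).coprime_iff_not_dvd).mpr hpi)
    have hd1 : Nat.card (P₀ : Subgroup G) ∣ p ^ (b + c) * Nat.card ↥Kbar := ⟨_, h1.symm⟩
    have hd2 : Nat.card (P₀ : Subgroup G) ∣ p ^ (b + c) := hcop1.dvd_of_dvd_mul_right hd1
    have hd3 : p ^ (b + c) ∣ Nat.card (P₀ : Subgroup G) * (P₀ : Subgroup G).index := ⟨_, h1⟩
    have hd4 : p ^ (b + c) ∣ Nat.card (P₀ : Subgroup G) := hcop2.dvd_of_dvd_mul_right hd3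
    have hxy : Nat.card (P₀ : Subgroup G) = p ^ (b + c) := Nat.dvd_antisymm hd2 hd4
    rw [hxy] at h1
    exact Nat.eq_of_mul_eq_mul_left (Nat.pow_pos (Fact.out : p.Prime).pos) h1
  refine ⟨P₀, H, hHnormal, Subgroup.isComplement'_of_coprime ?_ ?_⟩
  · rw [cardH, ← key, hGcard2]
  · rw [cardH, ← key]
    exact hcopP

universe u

lemma pnilpotent_aux {p : ℕ} [Fact p.Prime] (n : ℕ) :
    ∀ {G : Type u} [Group G] [Finite G] (N : Subgroup G) [N.Normal],
      Nat.card ↥N = n → IsPGroup p ↥N → N ≤ frattini G →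
      IsPNilpotent p (G ⧸ N) → IsPNilpotent p G := by
  induction n using Nat.strong_induction_on with
  | _ n ih =>
  intro G _ _ N _ hcard hpN hfr hquot
  rcases eq_or_ne N ⊥ with rfl | hNbot
  · exact IsPNilpotent.of_mulEquiv QuotientGroup.quotientBot hquot
  haveI : Nontrivial ↥N := (Subgroup.nontrivial_iff_ne_bot N).mpr hNbot
  by_cases hcen : Subgroup.center ↥N = ⊤
  · haveI : IsMulCommutative N :=
      ⟨⟨fun a b => (Subgroup.mem_center_iff.mp (hcen ▸ Subgroup.mem_top b) a)⟩⟩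
    exact abelian_case N hpN hfr hquot
  · set Z := (Subgroup.center ↥N).map N.subtype with hZdef
    haveI : Z.Normal := char_of_normal_is_normal _
    have hZN : Z ≤ N := Subgroup.map_subtype_le _
    haveI hcnt : Nontrivial ↥(Subgroup.center ↥N) := hpN.center_nontrivial
    haveI hZnt : Nontrivial ↥Z :=
      (Subgroup.equivMapOfInjective (Subgroup.center ↥N) N.subtype
        N.subtype_injective).toEquiv.symm.nontrivial
    have hZltN : Z ≠ N := by
      intro h
      apply hcen
      rw [eq_top_iff]
      intro x _
      have hx : (x : G) ∈ Z := by rw [h]; exact x.2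
      obtain ⟨c, hcmem, hcx⟩ := hx
      rwa [← show c = x from Subtype.ext hcx]
    have hZcard_lt : Nat.card ↥Z < Nat.card ↥N :=
      lt_of_le_of_ne (Subgroup.card_le_of_le hZN)
        (fun h => hZltN (Subgroup.eq_of_le_of_card_ge hZN h.ge))
    set N' : Subgroup (G ⧸ Z) := N.map (QuotientGroup.mk' Z) with hN'def
    haveI : N'.Normal := Subgroup.Normal.map ‹N.Normal› _ (QuotientGroup.mk'_surjective Z)
    have hN'card_lt : Nat.card ↥N' < Nat.card ↥N := by
      set f : ↥N → ↥N' :=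
        fun x => ⟨QuotientGroup.mk' Z x, Subgroup.mem_map_of_mem _ x.2⟩ with hfdef
      have hsurj : Function.Surjective f := by
        rintro ⟨y, hy⟩
        obtain ⟨x, hx, rfl⟩ := hy
        exact ⟨⟨x, hx⟩, rfl⟩
      have hle : Nat.card ↥N' ≤ Nat.card ↥N := Nat.card_le_card_of_surjective f hsurj
      rcases lt_or_eq_of_le hle with h | h
      · exact h
      exfalso
      have hbij : Function.Bijective f :=
        (Nat.bijective_iff_surjective_and_card f).mpr ⟨hsurj, h.symm⟩
      obtain ⟨z, hz⟩ := exists_ne (1 : ↥Z)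
      have hzN : (z : G) ∈ N := hZN z.2
      have h1 : f ⟨(z : G), hzN⟩ = f 1 := by
        refine Subtype.ext ?_
        show QuotientGroup.mk' Z (z : G) = QuotientGroup.mk' Z (1 : G)
        rw [map_one]
        rw [← MonoidHom.mem_ker, QuotientGroup.ker_mk']
        exact z.2
      have h2 := hbij.1 h1
      apply hz
      have h3 : (z : G) = 1 := congrArg Subtype.val h2
      exact Subtype.ext h3
    have step1 : IsPNilpotent p (G ⧸ Z) := by
      refine ih (Nat.card ↥N') (hcard ▸ hN'card_lt) N' rfl (hpN.map _) ?_ ?_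
      · exact Subgroup.map_le_iff_le_comap.mpr (hfr.trans
          (frattini_le_comap_frattini_of_surjective (QuotientGroup.mk'_surjective Z)))
      · exact IsPNilpotent.of_mulEquiv
          (QuotientGroup.quotientQuotientEquivQuotient Z N hZN).symm hquot
    exact ih (Nat.card ↥Z) (hcard ▸ hZcard_lt) Z rfl (hpN.to_le hZN) (hZN.trans hfr) step1

end Auxiliary

theorem pnilpotent_of_quotient_by_derived (p : ℕ) [Fact p.Prime] (G : Type*) [Group G] [Finite G]
    (P : Sylow p G)
    (hnorm : ((commutator ↥(P : Subgroup G)).map (P : Subgroup G).subtype).Normal)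
    (hquot : IsPNilpotent p (G ⧸ (commutator ↥(P : Subgroup G)).map (P : Subgroup G).subtype))
    (hΦ : (commutator ↥(P : Subgroup G)).map (P : Subgroup G).subtype ≤
      (frattini ↥(P : Subgroup G)).map (P : Subgroup G).subtype) :
    IsPNilpotent p G := by
  haveI := hnorm
  set N : Subgroup G := (commutator ↥(P : Subgroup G)).map (P : Subgroup G).subtype with hNdef
  have hNP : N ≤ (P : Subgroup G) := Subgroup.map_subtype_le _
  have hpN : IsPGroup p ↥N := P.2.to_le hNP
  have hfr : N ≤ frattini G := normal_le_frattini_of_le_frattini_sylow P N hΦ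
  exact pnilpotent_aux (Nat.card ↥N) N rfl hpN hfr hquot
end
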